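/- If m and m' are distinct positive integers with m > N/z, m' > N/z, P⁻(m) > z and P⁻(m') > z (where P⁻ denotes the smallest prime factor and z > 1 is real), then lcm(m, m') > N. -/

import Mathlib

theorem stmt_0 (N : ℕ) (hN : 0 < N) (z : ℝ) (hz : 1 < z)
    (m m' : ℕ) (hm : 2 ≤ m) (hm' : 2 ≤ m') (hne : m ≠ m')
    (h1 : (N : ℝ) / z < m) (h2 : (N : ℝ) / z < m')
    (h3 : z < (m.minFac : ℝ)) (h4 : z < (m'.minFac : ℝ)) :
    (N : ℝ) < (Nat.lcm m m' : ℝ) := by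
  have hz0 : (0:ℝ) < z := lt_trans one_pos hz
  have key : ∀ (a k : ℕ), (N : ℝ)/z < a → z < (k : ℝ) → (N : ℝ) < ((a * k : ℕ) : ℝ) := by
    intro a k ha hk
    have ha0 : (0:ℝ) < a := lt_of_le_of_lt (by positivity) ha
    have hNz : (N:ℝ) < a * z := by
      rw [div_lt_iff₀ hz0] at ha; nlinarith
    calc (N:ℝ) < a * z := hNz
      _ < a * k := mul_lt_mul_of_pos_left hk ha0
      _ = ((a * k : ℕ) : ℝ) := by push_cast; ring
  set g := Nat.gcd m m' with hg
  have hgdvd : g ∣ m := Nat.gcd_dvd_left m m'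
  have hgdvd' : g ∣ m' := Nat.gcd_dvd_right m m'
  have hm0 : 0 < m := by omega
  have hm'0 : 0 < m' := by omega
  have hg0 : 0 < g := Nat.gcd_pos_of_pos_left m' hm0
  set k := m' / g with hk
  have hmk : Nat.lcm m m' = m * k := by
    rw [hk, Nat.lcm, Nat.mul_div_assoc m hgdvd']
  have hk0 : 0 < k := Nat.div_pos (Nat.le_of_dvd hm'0 hgdvd') hg0
  rcases eq_or_lt_of_le (show 1 ≤ k from hk0) with h1k | h2k
  · -- k = 1, so g = m', m' ∣ m
    have hk1 : k = 1 := h1k.symm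
    have hgm' : g = m' := by
      have := Nat.div_mul_cancel hgdvd'
      rw [← hk, hk1] at this; simpa using this
    have hdvd : m' ∣ m := hgm' ▸ hgdvd
    obtain ⟨j, hj⟩ := hdvd
    have hj2 : 2 ≤ j := by
      rcases Nat.lt_or_ge j 2 with h | h
      · interval_cases j <;> omega
      · exact h
    have hjm : j ∣ m := ⟨m', by rw [hj]; ring⟩
    have hminle : m.minFac ≤ j := Nat.minFac_le_of_dvd hj2 hjm
    have : (N:ℝ) < ((m' * j : ℕ) : ℝ) := by
      apply key m' j h2
      calc z < (m.minFac : ℝ) := h3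
        _ ≤ j := by exact_mod_cast hminle
    rwa [hmk, hk1, mul_one, hj]
  · -- k ≥ 2
    have hkdvd : k ∣ m' := Nat.div_dvd_of_dvd hgdvd'
    have hminle : m'.minFac ≤ k := Nat.minFac_le_of_dvd h2k hkdvd
    have : (N:ℝ) < ((m * k : ℕ) : ℝ) := by
      apply key m k h1
      calc z < (m'.minFac : ℝ) := h4
        _ ≤ k := by exact_mod_cast hminle
    rwa [hmk]
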